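/- arXiv:1311.6018 — 5 statements merged into one kernel-verified Lean document; each statement's English description precedes it below -/
import Mathlib

section
/- The function μ(t) = 1 - 2tφ(t)/(2Φ(t) - 1) is nondecreasing on (0, ∞), where φ and Φ are the standard normal density and cumulative distribution function. -/
/-- Standard normal density. -/
noncomputable def stdPhi (t : ℝ) : ℝ := (Real.sqrt (2 * Real.pi))⁻¹ * Real.exp (-(t ^ 2) / 2)

/-- Standard normal cumulative distribution function. -/
noncomputable def stdCDF (t : ℝ) : ℝ := ∫ u in Set.Iic t, stdPhi u

open Real MeasureTheory Set

lemma stdPhi_pos (t : ℝ) : 0 < stdPhi t := by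
  have h1 : 0 < Real.sqrt (2 * Real.pi) := Real.sqrt_pos.2 (by positivity)
  exact mul_pos (inv_pos.2 h1) (Real.exp_pos _)

lemma stdPhi_cont : Continuous stdPhi := by
  unfold stdPhi
  fun_prop

lemma hasDerivAt_stdPhi (t : ℝ) : HasDerivAt stdPhi (-t * stdPhi t) t := by
  have h : HasDerivAt (fun t : ℝ => -(t ^ 2) / 2) (-t) t := by
    have := ((hasDerivAt_pow 2 t).neg).div_const 2
    simpa using this.congr_deriv (by ring)
  have := ((h.exp).const_mul (Real.sqrt (2 * Real.pi))⁻¹)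
  unfold stdPhi
  exact this.congr_deriv (by ring)

lemma integrable_stdPhi : Integrable stdPhi := by
  have h : Integrable (fun x : ℝ => Real.exp (-(1/2 : ℝ) * x ^ 2)) := by
    exact integrable_exp_neg_mul_sq (by norm_num)
  have : stdPhi = fun x => (Real.sqrt (2 * Real.pi))⁻¹ * Real.exp (-(1/2 : ℝ) * x ^ 2) := by
    funext x; unfold stdPhi; ring_nf
  rw [this]
  exact h.const_mul _

lemma integral_stdPhi : ∫ x, stdPhi x = 1 := by
  have h : ∫ x : ℝ, Real.exp (-(1/2 : ℝ) * x ^ 2) = Real.sqrt (Real.pi / (1/2)) :=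
    integral_gaussian (1/2)
  have heq : stdPhi = fun x => (Real.sqrt (2 * Real.pi))⁻¹ * Real.exp (-(1/2 : ℝ) * x ^ 2) := by
    funext x; unfold stdPhi; ring_nf
  rw [heq, MeasureTheory.integral_const_mul, h]
  have : Real.pi / (1/2) = 2 * Real.pi := by ring
  rw [this]
  exact inv_mul_cancel₀ (ne_of_gt (Real.sqrt_pos.2 (by positivity)))

lemma stdCDF_zero : stdCDF 0 = 1 / 2 := by
  have hsym : (∫ x in Iic (0:ℝ), stdPhi x) = ∫ x in Ioi (0:ℝ), stdPhi x := by
    have h := integral_comp_neg_Iic (0:ℝ) stdPhi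
    rw [neg_zero] at h
    rw [← h]
    refine setIntegral_congr_fun measurableSet_Iic fun x _ => ?_
    unfold stdPhi; ring_nf
  have hsum : (∫ x in Iic (0:ℝ), stdPhi x) + (∫ x in Ioi (0:ℝ), stdPhi x) = 1 := by
    rw [intervalIntegral.integral_Iic_add_Ioi integrable_stdPhi.integrableOn
      integrable_stdPhi.integrableOn]
    exact integral_stdPhi
  have : stdCDF 0 = ∫ x in Iic (0:ℝ), stdPhi x := rfl
  rw [this]; linarith [hsym, hsum]

lemma hasDerivAt_stdCDF (x : ℝ) : HasDerivAt stdCDF (stdPhi x) x := by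
  have heq : stdCDF = fun x => stdCDF 0 + ∫ t in (0:ℝ)..x, stdPhi t := by
    funext y
    have := intervalIntegral.integral_Iic_sub_Iic (μ := volume) (f := stdPhi)
      integrable_stdPhi.integrableOn integrable_stdPhi.integrableOn (a := 0) (b := y)
    simp only [stdCDF]
    linarith [this]
  rw [heq]
  have h : HasDerivAt (fun u => ∫ t in (0:ℝ)..u, stdPhi t) (stdPhi x) x :=
    intervalIntegral.integral_hasDerivAt_right
      (integrable_stdPhi.intervalIntegrable)
      (stdPhi_cont.stronglyMeasurable.stronglyMeasurableAtFilter)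
      stdPhi_cont.continuousAt
  simpa using h.const_add (stdCDF 0)

lemma hasDerivAt_F (t : ℝ) : HasDerivAt (fun t => 2 * stdCDF t - 1) (2 * stdPhi t) t :=
  ((hasDerivAt_stdCDF t).const_mul 2).sub_const 1

lemma F_strictMono : StrictMono (fun t => 2 * stdCDF t - 1) := by
  apply strictMono_of_deriv_pos
  intro x
  rw [(hasDerivAt_F x).deriv]
  have := stdPhi_pos x
  linarith

lemma F_pos {t : ℝ} (ht : 0 < t) : 0 < 2 * stdCDF t - 1 := by
  have := F_strictMono ht
  simp only [stdCDF_zero] at this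
  linarith

lemma F_nonneg {t : ℝ} (ht : 0 ≤ t) : 0 ≤ 2 * stdCDF t - 1 := by
  rcases eq_or_lt_of_le ht with h | h
  · rw [← h, stdCDF_zero]; norm_num
  · exact (F_pos h).le

noncomputable def hAux (t : ℝ) : ℝ := 2 * t * stdPhi t - (1 - t ^ 2) * (2 * stdCDF t - 1)

lemma hasDerivAt_hAux (t : ℝ) : HasDerivAt hAux (2 * t * (2 * stdCDF t - 1)) t := by
  have h1 : HasDerivAt (fun t : ℝ => 2 * t * stdPhi t)
      (2 * stdPhi t + 2 * t * (-t * stdPhi t)) t := by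
    have := ((hasDerivAt_id t).const_mul 2).mul (hasDerivAt_stdPhi t)
    exact this.congr_deriv (by simp only [id_eq]; ring)
  have h2 : HasDerivAt (fun t : ℝ => (1 - t ^ 2) * (2 * stdCDF t - 1))
      ((-(2 * t)) * (2 * stdCDF t - 1) + (1 - t ^ 2) * (2 * stdPhi t)) t := by
    have ha : HasDerivAt (fun t : ℝ => 1 - t ^ 2) (-(2 * t)) t := by
      simpa using ((hasDerivAt_pow 2 t).const_sub 1).congr_deriv (by ring)
    exact ha.mul (hasDerivAt_F t)
  have := h1.sub h2
  unfold hAux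
  exact this.congr_deriv (by ring)

lemma hAux_nonneg {t : ℝ} (ht : 0 ≤ t) : 0 ≤ hAux t := by
  have hmono : MonotoneOn hAux (Ici 0) := by
    apply monotoneOn_of_deriv_nonneg (convex_Ici 0)
    · exact fun x _ => (hasDerivAt_hAux x).continuousAt.continuousWithinAt
    · exact fun x _ => ((hasDerivAt_hAux x).differentiableAt).differentiableWithinAt
    · intro x hx
      rw [interior_Ici] at hx
      rw [(hasDerivAt_hAux x).deriv]
      exact mul_nonneg (by linarith [(mem_Ioi.1 hx).le]) (F_nonneg (le_of_lt hx))
  have h0 : hAux 0 = 0 := by unfold hAux; rw [stdCDF_zero]; ring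
  have := hmono (self_mem_Ici) (ht) ht
  linarith [h0 ▸ this]

/-- μ(t) = 1 - 2tφ(t)/(2Φ(t) - 1) is nondecreasing on (0, ∞). -/
theorem stmt0 :
    MonotoneOn (fun t : ℝ => 1 - 2 * t * stdPhi t / (2 * stdCDF t - 1)) (Set.Ioi 0) := by
  have key : ∀ t ∈ Set.Ioi (0:ℝ), HasDerivAt
      (fun t : ℝ => 1 - 2 * t * stdPhi t / (2 * stdCDF t - 1))
      (2 * stdPhi t * hAux t / (2 * stdCDF t - 1) ^ 2) t := by
    intro t ht
    rw [Set.mem_Ioi] at ht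
    have hF : (2 * stdCDF t - 1) ≠ 0 := ne_of_gt (F_pos ht)
    have h1 : HasDerivAt (fun t : ℝ => 2 * t * stdPhi t)
        (2 * stdPhi t + 2 * t * (-t * stdPhi t)) t := by
      have := ((hasDerivAt_id t).const_mul 2).mul (hasDerivAt_stdPhi t)
      exact this.congr_deriv (by simp only [id_eq]; ring)
    have hdiv := h1.div (hasDerivAt_F t) hF
    have := (hdiv.const_sub 1)
    refine this.congr_deriv ?_
    unfold hAux
    field_simp
    ring
  apply monotoneOn_of_deriv_nonneg (convex_Ioi 0)
  · exact fun x hx => ((key x hx).continuousAt).continuousWithinAt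
  · intro x hx
    rw [interior_Ioi] at hx
    exact ((key x hx).differentiableAt).differentiableWithinAt
  · intro x hx
    rw [interior_Ioi] at hx
    rw [(key x hx).deriv]
    have h1 := hAux_nonneg (le_of_lt hx)
    have h2 := stdPhi_pos x
    apply div_nonneg
    · nlinarith
    · positivity
end

section
/- For a univariate normal N(0, λ₁) truncated to (-√ρ, √ρ), the variance inequality var(X₁²) ≤ 2λ₁E(X₁²) holds. -/
/-- Variance inequality for the univariate N(0, λ₁) truncated to (-√ρ, √ρ):
var(X₁²) ≤ 2λ₁ E(X₁²). -/
theorem stmt3 (ρ l : ℝ) (hρ : 0 < ρ) (hl : 0 < l) :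
    let dens : ℝ → ℝ := fun x => (Real.sqrt l)⁻¹ * stdPhi ((Real.sqrt l)⁻¹ * x)
    let Z : ℝ := ∫ x in Set.Ioo (-Real.sqrt ρ) (Real.sqrt ρ), dens x
    let m2 : ℝ := (∫ x in Set.Ioo (-Real.sqrt ρ) (Real.sqrt ρ), x ^ 2 * dens x) / Z
    let m4 : ℝ := (∫ x in Set.Ioo (-Real.sqrt ρ) (Real.sqrt ρ), x ^ 4 * dens x) / Z
    m4 - m2 ^ 2 ≤ 2 * l * m2 := by
  intro dens Z m2 m4
  set a : ℝ := Real.sqrt ρ with ha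
  have ha0 : 0 < a := Real.sqrt_pos.mpr hρ
  have haa : a ^ 2 = ρ := Real.sq_sqrt hρ.le
  set f : ℝ → ℝ := fun x => Real.exp (-(x ^ 2) / (2 * l)) with hfdef
  have hcontf : Continuous f := by
    apply Real.continuous_exp.comp
    fun_prop
  have hfpos : ∀ x, 0 < f x := fun x => Real.exp_pos _
  set c : ℝ := (Real.sqrt (2 * Real.pi))⁻¹ * (Real.sqrt l)⁻¹ with hc
  have hcpos : 0 < c := by
    apply mul_pos <;> rw [inv_pos] <;> apply Real.sqrt_pos.mpr
    · positivity
    · exact hl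
  have hdens : ∀ x, dens x = c * f x := by
    intro x
    simp only [dens, stdPhi, f, c]
    rw [mul_pow, ← Real.sqrt_inv, Real.sq_sqrt (by positivity)]
    ring_nf
  -- interval integrals
  set J0 : ℝ := ∫ x in (-a)..a, f x with hJ0
  set J2 : ℝ := ∫ x in (-a)..a, x ^ 2 * f x with hJ2
  set J4 : ℝ := ∫ x in (-a)..a, x ^ 4 * f x with hJ4
  have hIoo : ∀ g : ℝ → ℝ, (∫ x in Set.Ioo (-a) a, g x) = ∫ x in (-a)..a, g x := by
    intro g
    rw [intervalIntegral.integral_of_le (by linarith), MeasureTheory.integral_Ioc_eq_integral_Ioo]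
  have hZ : Z = c * J0 := by
    simp only [Z]
    rw [show (fun x => dens x) = fun x => c * f x from funext hdens] -- maybe unnecessary
    rw [hIoo, intervalIntegral.integral_const_mul]
  have hM2 : (∫ x in Set.Ioo (-a) a, x ^ 2 * dens x) = c * J2 := by
    have : (fun x => x ^ 2 * dens x) = fun x => c * (x ^ 2 * f x) := by
      funext x; rw [hdens]; ring
    rw [this, hIoo, intervalIntegral.integral_const_mul]
  have hM4 : (∫ x in Set.Ioo (-a) a, x ^ 4 * dens x) = c * J4 := by
    have : (fun x => x ^ 4 * dens x) = fun x => c * (x ^ 4 * f x) := by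
      funext x; rw [hdens]; ring
    rw [this, hIoo, intervalIntegral.integral_const_mul]
  -- derivative of f
  have hf' : ∀ x : ℝ, HasDerivAt f (f x * (-x / l)) x := by
    intro x
    have hg : HasDerivAt (fun x : ℝ => -(x ^ 2) / (2 * l)) (-x / l) x := by
      have := ((hasDerivAt_pow 2 x).neg.div_const (2 * l))
      refine this.congr_deriv ?_
      field_simp
      ring
    exact hg.exp
  have hint : ∀ n : ℕ, IntervalIntegrable (fun x => x ^ n * f x) MeasureTheory.volume (-a) a := by
    intro n
    exact (Continuous.mul (continuous_pow n) hcontf).intervalIntegrable _ _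
  have hint0 : IntervalIntegrable f MeasureTheory.volume (-a) a :=
    hcontf.intervalIntegrable _ _
  set E : ℝ := f a with hE
  have hEpos : 0 < E := hfpos a
  have hfeven : f (-a) = f a := by simp [f]
  -- first FTC identity: J2 = l * J0 - 2*l*a*E
  have key2 : J2 - l * J0 = -(2 * l * a * E) := by
    have hderiv : ∀ x ∈ Set.uIcc (-a) a, HasDerivAt (fun x => -l * x * f x) (x ^ 2 * f x - l * f x) x := by
      intro x _
      have h1 : HasDerivAt (fun x : ℝ => -l * x) (-l) x := by
        simpa using (hasDerivAt_id x).const_mul (-l)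
      have := h1.mul (hf' x)
      refine this.congr_deriv ?_
      field_simp
      ring
    have hieq : IntervalIntegrable (fun x => x ^ 2 * f x - l * f x) MeasureTheory.volume (-a) a :=
      (hint 2).sub (hint0.const_mul l)
    have := intervalIntegral.integral_eq_sub_of_hasDerivAt hderiv hieq
    rw [intervalIntegral.integral_sub (hint 2) (hint0.const_mul l),
      intervalIntegral.integral_const_mul] at this
    rw [hfeven] at this
    rw [this]; ring
  -- second FTC identity: J4 = 3*l*J2 - 2*l*a^3*E
  have key4 : J4 - 3 * l * J2 = -(2 * l * a ^ 3 * E) := by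
    have hderiv : ∀ x ∈ Set.uIcc (-a) a, HasDerivAt (fun x => -l * x ^ 3 * f x) (x ^ 4 * f x - 3 * l * (x ^ 2 * f x)) x := by
      intro x _
      have h1 : HasDerivAt (fun x : ℝ => -l * x ^ 3) (-l * (3 * x ^ 2)) x := by
        simpa using (hasDerivAt_pow 3 x).const_mul (-l)
      have := h1.mul (hf' x)
      refine this.congr_deriv ?_
      field_simp
      ring
    have hieq : IntervalIntegrable (fun x => x ^ 4 * f x - 3 * l * (x ^ 2 * f x)) MeasureTheory.volume (-a) a :=
      (hint 4).sub ((hint 2).const_mul (3 * l))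
    have := intervalIntegral.integral_eq_sub_of_hasDerivAt hderiv hieq
    rw [intervalIntegral.integral_sub (hint 4) ((hint 2).const_mul (3 * l)),
      intervalIntegral.integral_const_mul] at this
    rw [hfeven] at this
    rw [this]; ring
  -- positivity and domination
  have hJ0pos : 0 < J0 :=
    intervalIntegral.intervalIntegral_pos_of_pos hint0 hfpos (by linarith)
  have hJ2nonneg : 0 ≤ J2 := by
    apply intervalIntegral.integral_nonneg (by linarith)
    intro x _
    positivity
  have hJ2le : J2 ≤ ρ * J0 := by
    have : J2 ≤ ∫ x in (-a)..a, ρ * f x := by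
      apply intervalIntegral.integral_mono_on (by linarith) (hint 2) (hint0.const_mul ρ)
      intro x hx
      have hx2 : x ^ 2 ≤ ρ := by
        rw [← haa]
        exact sq_le_sq' hx.1 hx.2
      have := (hfpos x).le
      nlinarith
    rwa [intervalIntegral.integral_const_mul] at this
  -- the key polynomial inequality
  have hkey : J4 * J0 - J2 ^ 2 ≤ 2 * l * (J2 * J0) := by
    have hid : J4 * J0 - J2 ^ 2 - 2 * l * (J2 * J0) = 2 * l * a * E * (J2 - a ^ 2 * J0) := by
      linear_combination J0 * key4 - J2 * key2
    nlinarith [mul_nonneg (mul_nonneg (mul_nonneg (by linarith : (0:ℝ) ≤ 2 * l) ha0.le) hEpos.le) (by nlinarith : 0 ≤ a ^ 2 * J0 - J2)]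
  -- conclude
  have hZval : m2 = J2 / J0 ∧ m4 = J4 / J0 := by
    constructor
    · simp only [m2, hZ]
      rw [show (∫ x in Set.Ioo (-√ρ) √ρ, x ^ 2 * dens x) = c * J2 from hM2, mul_div_mul_left _ _ (ne_of_gt hcpos)]
    · simp only [m4, hZ]
      rw [show (∫ x in Set.Ioo (-√ρ) √ρ, x ^ 4 * dens x) = c * J4 from hM4, mul_div_mul_left _ _ (ne_of_gt hcpos)]
  rw [hZval.1, hZval.2]
  have h1 : J4 / J0 - (J2 / J0) ^ 2 = (J4 * J0 - J2 ^ 2) / J0 ^ 2 := by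
    field_simp
  have h2 : 2 * l * (J2 / J0) = 2 * l * (J2 * J0) / J0 ^ 2 := by
    field_simp
  rw [h1, h2]
  exact div_le_div_of_nonneg_right hkey (by positivity) |>.trans_eq rfl
end

section
/- The cumulative distribution function of a chi-square random variable with k degrees of freedom is log-concave on (0, ∞). -/
open Real MeasureTheory Set

noncomputable def phi (a : ℝ) (v : ℝ) : ℝ := v ^ (a - 1) * Real.exp (-v / 2)

lemma phi_pos (a : ℝ) {v : ℝ} (hv : 0 < v) : 0 < phi a v :=
  mul_pos (Real.rpow_pos_of_pos hv _) (Real.exp_pos _)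

lemma phi_nonneg (a : ℝ) {v : ℝ} (hv : 0 ≤ v) : 0 ≤ phi a v :=
  mul_nonneg (Real.rpow_nonneg hv _) (Real.exp_pos _).le

lemma phi_meas (a : ℝ) : Measurable (phi a) := by
  unfold phi; fun_prop

lemma phi_intble (a : ℝ) (ha : 0 < a) {u₁ u₂ : ℝ} (h1 : 0 ≤ u₁) (h2 : u₁ ≤ u₂) :
    IntervalIntegrable (phi a) volume u₁ u₂ := by
  have base : IntervalIntegrable (fun v : ℝ => v ^ (a - 1)) volume u₁ u₂ :=
    intervalIntegral.intervalIntegrable_rpow' (by linarith)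
  refine base.mono_fun ((phi_meas a).aestronglyMeasurable) ?_
  refine (ae_restrict_iff' measurableSet_uIoc).2 (ae_of_all _ fun v hv => ?_)
  rw [Set.uIoc_of_le h2] at hv
  have hv0 : 0 < v := lt_of_le_of_lt h1 hv.1
  show ‖phi a v‖ ≤ ‖v ^ (a - 1)‖
  have h1' : ‖phi a v‖ = v ^ (a - 1) * Real.exp (-v / 2) := by
    rw [Real.norm_eq_abs, abs_of_nonneg (phi_nonneg a hv0.le)]; rfl
  rw [h1', Real.norm_eq_abs, abs_of_nonneg (Real.rpow_nonneg hv0.le _)]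
  nth_rewrite 2 [← mul_one (v ^ (a - 1))]
  exact mul_le_mul_of_nonneg_left (Real.exp_le_one_iff.2 (by linarith)) (Real.rpow_nonneg hv0.le _)

noncomputable def Fc (a : ℝ) (u : ℝ) : ℝ := ∫ v in (0:ℝ)..u, phi a v

lemma Fc_pos (a : ℝ) (ha : 0 < a) {u : ℝ} (hu : 0 < u) : 0 < Fc a u :=
  intervalIntegral.intervalIntegral_pos_of_pos_on (phi_intble a ha le_rfl hu.le)
    (fun x hx => phi_pos a hx.1) hu

lemma Fc_mono (a : ℝ) (ha : 0 < a) {u₁ u₂ : ℝ} (h1 : 0 ≤ u₁) (h2 : u₁ ≤ u₂) :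
    Fc a u₁ ≤ Fc a u₂ := by
  have hadd : Fc a u₁ + ∫ v in u₁..u₂, phi a v = Fc a u₂ :=
    intervalIntegral.integral_add_adjacent_intervals (phi_intble a ha le_rfl h1)
      (phi_intble a ha h1 h2)
  have hnn : 0 ≤ ∫ v in u₁..u₂, phi a v :=
    intervalIntegral.integral_nonneg h2 (fun v hv => phi_nonneg a (le_trans h1 hv.1))
  linarith

lemma key_ineq (a : ℝ) (ha : 0 < a) {u₁ u₂ : ℝ} (h1 : 0 < u₁) (h2 : u₁ ≤ u₂) :
    phi a u₂ * Fc a u₁ ≤ phi a u₁ * Fc a u₂ := by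
  rcases le_total a 1 with hA | hB
  · -- phi antitone
    have hphi : phi a u₂ ≤ phi a u₁ := by
      unfold phi
      have hr : u₂ ^ (a - 1) ≤ u₁ ^ (a - 1) :=
        Real.rpow_le_rpow_of_nonpos h1 h2 (by linarith)
      have he : Real.exp (-u₂ / 2) ≤ Real.exp (-u₁ / 2) :=
        Real.exp_le_exp.2 (by linarith)
      exact mul_le_mul hr he (Real.exp_pos _).le (Real.rpow_nonneg h1.le _)
    calc phi a u₂ * Fc a u₁ ≤ phi a u₁ * Fc a u₁ :=
          mul_le_mul_of_nonneg_right hphi (Fc_pos a ha h1).le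
      _ ≤ phi a u₁ * Fc a u₂ :=
          mul_le_mul_of_nonneg_left (Fc_mono a ha h1.le h2) (phi_nonneg a h1.le)
  · -- log-concave case
    set d := u₂ - u₁ with hd
    have hd0 : 0 ≤ d := by linarith
    have hpt : ∀ v ∈ Set.Icc 0 u₁, phi a u₂ * phi a v ≤ phi a u₁ * phi a (v + d) := by
      intro v hv
      obtain ⟨hv0, hvu⟩ := hv
      unfold phi
      have hexp : Real.exp (-u₂ / 2) * Real.exp (-v / 2)
          = Real.exp (-u₁ / 2) * Real.exp (-(v + d) / 2) := by
        rw [← Real.exp_add, ← Real.exp_add, hd]; ring_nf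
      have hrp : u₂ ^ (a - 1) * v ^ (a - 1) ≤ u₁ ^ (a - 1) * (v + d) ^ (a - 1) := by
        rw [← Real.mul_rpow (by linarith) hv0, ← Real.mul_rpow h1.le (by linarith)]
        exact Real.rpow_le_rpow (mul_nonneg (by linarith) hv0) (by nlinarith) (by linarith)
      calc u₂ ^ (a - 1) * Real.exp (-u₂ / 2) * (v ^ (a - 1) * Real.exp (-v / 2))
          = (u₂ ^ (a - 1) * v ^ (a - 1)) * (Real.exp (-u₂ / 2) * Real.exp (-v / 2)) := by ring
        _ ≤ (u₁ ^ (a - 1) * (v + d) ^ (a - 1)) * (Real.exp (-u₁ / 2) * Real.exp (-(v + d) / 2)) := by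
            rw [hexp]
            exact mul_le_mul_of_nonneg_right hrp (by positivity)
        _ = u₁ ^ (a - 1) * Real.exp (-u₁ / 2) * ((v + d) ^ (a - 1) * Real.exp (-(v + d) / 2)) := by
            ring
    have hint2 : IntervalIntegrable (phi a) volume d u₂ :=
      (phi_intble a ha le_rfl (by linarith : (0:ℝ) ≤ u₂)).mono_set
        (Set.uIcc_subset_uIcc_iff_le.2 (by constructor <;> [skip; skip] <;>
          simp [min_eq_left, max_eq_right, hd0, h1.le, h2, le_trans h1.le h2] <;> linarith))
    have hshift : IntervalIntegrable (fun v => phi a (v + d)) volume 0 u₁ := by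
      have h := hint2.comp_add_right d
      have e0 : d - d = 0 := by ring
      have e1 : u₂ - d = u₁ := by ring
      rw [e0, e1] at h
      exact h
    have hstep : phi a u₂ * Fc a u₁ ≤ phi a u₁ * ∫ v in d..u₂, phi a v := by
      have hmono := intervalIntegral.integral_mono_on h1.le
        ((phi_intble a ha le_rfl h1.le).const_mul (phi a u₂))
        (hshift.const_mul (phi a u₁)) hpt
      rw [intervalIntegral.integral_const_mul, intervalIntegral.integral_const_mul] at hmono
      have hcv : (∫ v in (0:ℝ)..u₁, phi a (v + d)) = ∫ v in d..u₂, phi a v := by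
        rw [intervalIntegral.integral_comp_add_right]
        norm_num
        congr 1
        linarith
      rw [hcv] at hmono
      exact hmono
    refine hstep.trans (mul_le_mul_of_nonneg_left ?_ (phi_nonneg a h1.le))
    have hadd : (∫ v in (0:ℝ)..d, phi a v) + ∫ v in d..u₂, phi a v = Fc a u₂ :=
      intervalIntegral.integral_add_adjacent_intervals (phi_intble a ha le_rfl hd0) hint2
    have hnn : 0 ≤ ∫ v in (0:ℝ)..d, phi a v :=
      intervalIntegral.integral_nonneg hd0 (fun v hv => phi_nonneg a hv.1)
    linarith

lemma hasDerivAt_Fc (a : ℝ) (ha : 0 < a) {u : ℝ} (hu : 0 < u) :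
    HasDerivAt (Fc a) (phi a u) u := by
  refine intervalIntegral.integral_hasDerivAt_right (phi_intble a ha le_rfl hu.le)
    ((phi_meas a).stronglyMeasurable.stronglyMeasurableAtFilter) ?_
  unfold phi
  exact ((Real.continuousAt_rpow_const u (a-1) (Or.inl hu.ne')).mul
    ((Real.continuous_exp.comp (continuous_id.neg.div_const 2)).continuousAt))

lemma concave_logFc (a : ℝ) (ha : 0 < a) :
    ConcaveOn ℝ (Set.Ioi 0) (fun u => Real.log (Fc a u)) := by
  have hderiv : ∀ u ∈ Set.Ioi (0:ℝ),
      HasDerivAt (fun u => Real.log (Fc a u)) (phi a u / Fc a u) u := by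
    intro u hu
    exact (hasDerivAt_Fc a ha hu).log (Fc_pos a ha hu).ne'
  have hdiff : DifferentiableOn ℝ (fun u => Real.log (Fc a u)) (interior (Set.Ioi 0)) := by
    rw [interior_Ioi]
    exact fun u hu => ((hderiv u hu).differentiableAt).differentiableWithinAt
  refine AntitoneOn.concaveOn_of_deriv (convex_Ioi 0) ?_ hdiff ?_
  · exact hdiff.continuousOn.mono (by rw [interior_Ioi])
  · rw [interior_Ioi]
    intro u₁ hu1 u₂ hu2 h12
    rw [(hderiv u₁ hu1).deriv, (hderiv u₂ hu2).deriv]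
    rw [div_le_div_iff₀ (Fc_pos a ha hu2) (Fc_pos a ha hu1)]
    exact key_ineq a ha hu1 h12

lemma concaveOn_congr' {s : Set ℝ} {f g : ℝ → ℝ} (h : ConcaveOn ℝ s g)
    (he : ∀ x ∈ s, f x = g x) : ConcaveOn ℝ s f := by
  refine ⟨h.1, fun x hx y hy a b ha hb hab => ?_⟩
  rw [he x hx, he y hy, he _ (h.1 hx hy ha hb hab)]
  exact h.2 hx hy ha hb hab

/-- The cdf of a chi-square random variable with k degrees of freedom is
log-concave on (0, ∞). -/
theorem stmt5 (k : ℕ) (hk : 0 < k) :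
    ConcaveOn ℝ (Set.Ioi 0)
      (fun u => Real.log (∫ v in Set.Ioc (0:ℝ) u,
        v ^ ((k : ℝ) / 2 - 1) * Real.exp (-v / 2) /
          (2 ^ ((k : ℝ) / 2) * Real.Gamma ((k : ℝ) / 2)))) := by
  set a : ℝ := (k : ℝ) / 2 with hadef
  have ha : 0 < a := by positivity
  set C : ℝ := 2 ^ ((k : ℝ) / 2) * Real.Gamma ((k : ℝ) / 2) with hC
  have hCpos : 0 < C := mul_pos (Real.rpow_pos_of_pos two_pos _) (Real.Gamma_pos_of_pos ha)
  have hconc : ConcaveOn ℝ (Set.Ioi 0) (fun u => Real.log (Fc a u) + (- Real.log C)) :=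
    (concave_logFc a ha).add (concaveOn_const _ (convex_Ioi 0))
  refine concaveOn_congr' hconc ?_
  intro u hu
  have hu0 : (0:ℝ) < u := hu
  have h1 : (∫ v in Set.Ioc (0:ℝ) u, phi a v / C) = Fc a u / C := by
    rw [integral_div]
    congr 1
    rw [Fc, intervalIntegral.integral_of_le hu0.le]
  have h2 : (fun v => v ^ (a - 1) * Real.exp (-v / 2) / C) = fun v => phi a v / C := rfl
  show Real.log (∫ v in Set.Ioc (0:ℝ) u, phi a v / C) = _
  rw [h1, Real.log_div (Fc_pos a ha hu0).ne' hCpos.ne', sub_eq_add_neg]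
end

section
/- With p_j defined by the recursion p_j = j^{-1}Σ_{i=0}^{j-1}M_{j-i}p_i (p_0 > 0, M_j = (1/2)Σ_{i=2}^s c_i^j, 0 ≤ c_i < 1, some c_i > 0), the sequence of partial sums W_i = Σ_{j=0}^i p_j satisfies the strengthened log-concavity inequality ((i+1)p_{i+1})/(i p_i) ≤ W_i/W_{i-1} for all i ≥ 1. -/
open Finset

/-- Triangular sum swap: `∑_{j<n} ∑_{k<n-j} f j k = ∑_{k<n} ∑_{j<n-k} f j k`. -/
lemma tri_swap (f : ℕ → ℕ → ℝ) : ∀ n : ℕ,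
    ∑ j ∈ range n, ∑ k ∈ range (n - j), f j k
      = ∑ k ∈ range n, ∑ j ∈ range (n - k), f j k := by
  have split : ∀ (g : ℕ → ℕ → ℝ) (n : ℕ),
      ∑ j ∈ range (n + 1), ∑ k ∈ range (n + 1 - j), g j k
        = (∑ j ∈ range n, ∑ k ∈ range (n - j), g j k)
          + ∑ j ∈ range (n + 1), g j (n - j) := by
    intro g n
    rw [Finset.sum_range_succ, Finset.sum_range_succ (fun j => g j (n - j))]
    have h1 : ∀ j ∈ range n,
        ∑ k ∈ range (n + 1 - j), g j k
          = (∑ k ∈ range (n - j), g j k) + g j (n - j) := by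
      intro j hj
      have hj' : j < n := Finset.mem_range.1 hj
      rw [show n + 1 - j = (n - j) + 1 by omega, Finset.sum_range_succ]
    rw [Finset.sum_congr rfl h1, Finset.sum_add_distrib]
    simp [Nat.sub_self]
    ring
  have refl' : ∀ (g : ℕ → ℕ → ℝ) (n : ℕ),
      ∑ j ∈ range (n + 1), g j (n - j) = ∑ k ∈ range (n + 1), g (n - k) k := by
    intro g n
    have := Finset.sum_range_reflect (fun k => g (n - k) k) (n + 1)
    rw [← this]
    apply Finset.sum_congr rfl
    intro j hj
    have hj' : j < n + 1 := Finset.mem_range.1 hj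
    rw [show n + 1 - 1 - j = n - j by omega, show n - (n - j) = j by omega]
  intro n
  induction n with
  | zero => simp
  | succ n ih =>
      rw [split f n, split (fun k j => f j k) n, ih, refl' f n]

/-- Strengthened log-concavity inequality (4.12) for the partial sums of the
Robbins–Pitman weights: ((i+1)p_{i+1})/(i p_i) ≤ W_i / W_{i-1} for i ≥ 1. -/
theorem stmt7 (s : ℕ) (hs : 2 ≤ s) (c : ℕ → ℝ)
    (hc : ∀ i ∈ Finset.Icc 2 s, 0 ≤ c i ∧ c i < 1)
    (hcpos : ∃ i ∈ Finset.Icc 2 s, 0 < c i)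
    (M : ℕ → ℝ) (hM : ∀ j : ℕ, 1 ≤ j → M j = (1 / 2) * ∑ i ∈ Finset.Icc 2 s, c i ^ j)
    (p : ℕ → ℝ) (hp0 : 0 < p 0)
    (hrec : ∀ j : ℕ, 1 ≤ j → p j = (j : ℝ)⁻¹ * ∑ i ∈ Finset.range j, M (j - i) * p i)
    (W : ℕ → ℝ) (hW : ∀ i, W i = ∑ j ∈ Finset.range (i + 1), p j) :
    ∀ i : ℕ, 1 ≤ i →
      ((i + 1 : ℝ) * p (i + 1)) / ((i : ℝ) * p i) ≤ W i / W (i - 1) := by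
  -- Positivity of M
  have hMpos : ∀ m : ℕ, 1 ≤ m → 0 < M m := by
    intro m hm
    rw [hM m hm]
    apply mul_pos (by norm_num)
    obtain ⟨i0, hi0, hc0⟩ := hcpos
    exact Finset.sum_pos' (fun i hi => pow_nonneg (hc i hi).1 m) ⟨i0, hi0, pow_pos hc0 m⟩
  -- M is antitone (on m ≥ 1)
  have hMdec : ∀ m : ℕ, 1 ≤ m → M (m + 1) ≤ M m := by
    intro m hm
    rw [hM m hm, hM (m + 1) (by omega)]
    apply mul_le_mul_of_nonneg_left _ (by norm_num)
    apply Finset.sum_le_sum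
    intro i hi
    have h1 := (hc i hi).1
    have h2 := (hc i hi).2.le
    calc c i ^ (m + 1) = c i ^ m * c i := by ring
      _ ≤ c i ^ m * 1 := by
          apply mul_le_mul_of_nonneg_left h2 (pow_nonneg h1 m)
      _ = c i ^ m := by ring
  -- Positivity of p
  have hppos : ∀ j : ℕ, 0 < p j := by
    intro j
    induction j using Nat.strong_induction_on with
    | _ j ih =>
      rcases Nat.eq_zero_or_pos j with h | h
      · simpa [h] using hp0
      · rw [hrec j h]
        apply mul_pos (inv_pos.2 (by exact_mod_cast h))
        apply Finset.sum_pos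
        · intro k hk
          have hk' : k < j := Finset.mem_range.1 hk
          exact mul_pos (hMpos _ (by omega)) (ih k hk')
        · exact Finset.nonempty_range_iff.2 (by omega)
  -- Positivity of W
  have hWpos : ∀ i : ℕ, 0 < W i := by
    intro i
    rw [hW i]
    exact Finset.sum_pos (fun j _ => hppos j) (Finset.nonempty_range_iff.2 (by omega))
  have hWsucc : ∀ n : ℕ, W (n + 1) = W n + p (n + 1) := by
    intro n
    rw [hW (n + 1), hW n, Finset.sum_range_succ]
  -- multiplied form of the recursion
  have hrec' : ∀ j : ℕ, 1 ≤ j →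
      (j : ℝ) * p j = ∑ k ∈ Finset.range j, M (j - k) * p k := by
    intro j hj
    have hj0 : (j : ℝ) ≠ 0 := Nat.cast_ne_zero.2 (by omega)
    rw [hrec j hj]
    field_simp
  -- The key inequality, by strong induction.
  have key : ∀ n : ℕ, ((n : ℝ) + 2) * p (n + 2) * W n
      ≤ ((n : ℝ) + 1) * p (n + 1) * W (n + 1) := by
    intro n
    induction n using Nat.strong_induction_on with
    | _ n ih =>
      -- single-step consequence of IH
      have star : ∀ k : ℕ, 1 ≤ k → k ≤ n → p (k + 1) * W (k - 1) ≤ p k * W k := by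
        intro k hk1 hkn
        obtain ⟨m, rfl⟩ : ∃ m, k = m + 1 := ⟨k - 1, by omega⟩
        have h := ih m (by omega)
        have hpw : 0 ≤ p (m + 1) * W (m + 1) :=
          le_of_lt (mul_pos (hppos _) (hWpos _))
        have h2 : ((m : ℝ) + 2) * (p (m + 2) * W m)
            ≤ ((m : ℝ) + 2) * (p (m + 1) * W (m + 1)) := by nlinarith
        have := le_of_mul_le_mul_left h2 (by positivity : (0:ℝ) < (m : ℝ) + 2)
        simpa using this
      -- telescoped form
      have tele : ∀ t m : ℕ, 1 ≤ m → m + t = n →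
          p (n + 1) * W (m - 1) ≤ p m * W n := by
        intro t
        induction t with
        | zero =>
            intro m hm1 hmn
            obtain rfl : m = n := by omega
            exact star _ hm1 le_rfl
        | succ t iht =>
          intro m hm1 hmn
          have prev := iht (m + 1) (by omega) (by omega)
          rw [show m + 1 - 1 = m from rfl] at prev
          have hsm := star m hm1 (by omega)
          have hWm := hWpos m
          have hWm1 : (0:ℝ) ≤ W (m - 1) := (hWpos _).le
          have hWn : (0:ℝ) ≤ W n := (hWpos n).le
          have h1 : p (n + 1) * W (m - 1) * W m ≤ p m * W n * W m := by
            calc p (n + 1) * W (m - 1) * W m = (p (n + 1) * W m) * W (m - 1) := by ring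
              _ ≤ (p (m + 1) * W n) * W (m - 1) := by
                  apply mul_le_mul_of_nonneg_right prev hWm1
              _ = (p (m + 1) * W (m - 1)) * W n := by ring
              _ ≤ (p m * W m) * W n := by
                  apply mul_le_mul_of_nonneg_right hsm hWn
              _ = p m * W n * W m := by ring
          exact le_of_mul_le_mul_right h1 hWm
      -- abbreviations
      set SA := ∑ k ∈ Finset.range (n + 1), M (n + 1 - k) * p k with hSA
      set SB := ∑ k ∈ Finset.range (n + 1), M (n + 2 - k) * p k with hSB
      have hA : ((n : ℝ) + 1) * p (n + 1) = SA := by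
        have := hrec' (n + 1) (by omega)
        rw [hSA]; push_cast at this ⊢; convert this using 2
      have hB : ((n : ℝ) + 2) * p (n + 2) = SB + M 1 * p (n + 1) := by
        have := hrec' (n + 2) (by omega)
        rw [Finset.sum_range_succ] at this
        rw [show n + 2 - (n + 1) = 1 from by omega] at this
        rw [hSB]; push_cast at this ⊢; convert this using 2
      -- identity for the "B" part
      have hC : M 1 * W n - SA
          = ∑ j ∈ Finset.range n, (M (j + 1) - M (j + 2)) * W (n - 1 - j) := by
        have e1 : M 1 * W n - SA
            = ∑ k ∈ Finset.range (n + 1), (M 1 - M (n + 1 - k)) * p k := by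
          rw [hW n, hSA, Finset.mul_sum, ← Finset.sum_sub_distrib]
          exact Finset.sum_congr rfl (fun k _ => by ring)
        rw [e1, Finset.sum_range_succ, show n + 1 - n = 1 from by omega, sub_self,
          zero_mul, add_zero]
        have e2 : ∀ k ∈ Finset.range n,
            (M 1 - M (n + 1 - k)) * p k
              = ∑ j ∈ Finset.range (n - k), (M (j + 1) - M (j + 2)) * p k := by
          intro k hk
          have hk' : k < n := Finset.mem_range.1 hk
          have := Finset.sum_range_sub' (fun j => M (j + 1)) (n - k)
          beta_reduce at this
          rw [← Finset.sum_mul, this, show n - k + 1 = n + 1 - k from by omega]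
        rw [Finset.sum_congr rfl e2, tri_swap (fun k j => (M (j + 1) - M (j + 2)) * p k) n]
        apply Finset.sum_congr rfl
        intro j hj
        have hj' : j < n := Finset.mem_range.1 hj
        rw [← Finset.mul_sum]
        congr 1
        rw [hW (n - 1 - j), show n - 1 - j + 1 = n - j from by omega]
      -- the "A" part, reflected
      have hAref : ∑ j ∈ Finset.range (n + 1), (M (j + 1) - M (j + 2)) * p (n - j)
          = SA - SB := by
        have := Finset.sum_range_reflect
          (fun k => (M (n + 1 - k) - M (n + 2 - k)) * p k) (n + 1)
        rw [hSA, hSB, ← Finset.sum_sub_distrib]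
        rw [show (∑ k ∈ Finset.range (n+1), (M (n+1-k) * p k - M (n+2-k) * p k))
            = ∑ k ∈ Finset.range (n+1), (M (n+1-k) - M (n+2-k)) * p k from
          Finset.sum_congr rfl (fun k _ => by ring), ← this]
        apply Finset.sum_congr rfl
        intro j hj
        have hj' : j < n + 1 := Finset.mem_range.1 hj
        rw [show n + 1 - 1 - j = n - j from by omega,
          show n + 1 - (n - j) = j + 1 from by omega,
          show n + 2 - (n - j) = j + 2 from by omega]
      -- the central estimate
      have hQ : p (n + 1) * (M 1 * W n - SA) ≤ W n * (SA - SB) := by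
        rw [hC, Finset.mul_sum]
        have step1 : ∑ j ∈ Finset.range n, p (n + 1) * ((M (j + 1) - M (j + 2)) * W (n - 1 - j))
            ≤ ∑ j ∈ Finset.range n, (M (j + 1) - M (j + 2)) * (p (n - j) * W n) := by
          apply Finset.sum_le_sum
          intro j hj
          have hj' : j < n := Finset.mem_range.1 hj
          have hcoef : 0 ≤ M (j + 1) - M (j + 2) := sub_nonneg.2 (hMdec (j + 1) (by omega))
          have ht : p (n + 1) * W (n - j - 1) ≤ p (n - j) * W n :=
            tele j (n - j) (by omega) (by omega)
          rw [show n - 1 - j = n - j - 1 from by omega]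
          calc p (n + 1) * ((M (j + 1) - M (j + 2)) * W (n - j - 1))
              = (M (j + 1) - M (j + 2)) * (p (n + 1) * W (n - j - 1)) := by ring
            _ ≤ (M (j + 1) - M (j + 2)) * (p (n - j) * W n) :=
                mul_le_mul_of_nonneg_left ht hcoef
        have step2 : ∑ j ∈ Finset.range n, (M (j + 1) - M (j + 2)) * (p (n - j) * W n)
            ≤ ∑ j ∈ Finset.range (n + 1), (M (j + 1) - M (j + 2)) * (p (n - j) * W n) := by
          rw [Finset.sum_range_succ]
          have : 0 ≤ (M (n + 1) - M (n + 2)) * (p (n - n) * W n) := by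
            apply mul_nonneg (sub_nonneg.2 (hMdec (n + 1) (by omega)))
            exact le_of_lt (mul_pos (hppos _) (hWpos _))
          linarith
        have step3 : ∑ j ∈ Finset.range (n + 1), (M (j + 1) - M (j + 2)) * (p (n - j) * W n)
            = W n * (SA - SB) := by
          rw [← hAref, Finset.mul_sum]
          exact Finset.sum_congr rfl (fun j _ => by ring)
        calc ∑ j ∈ Finset.range n, p (n + 1) * ((M (j + 1) - M (j + 2)) * W (n - 1 - j))
            ≤ ∑ j ∈ Finset.range n, (M (j + 1) - M (j + 2)) * (p (n - j) * W n) := step1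
          _ ≤ ∑ j ∈ Finset.range (n + 1), (M (j + 1) - M (j + 2)) * (p (n - j) * W n) := step2
          _ = W n * (SA - SB) := step3
      -- conclude
      rw [hWsucc n]
      nlinarith [hQ, hA, hB, hppos (n + 1), hWpos n]
  -- derive the stated form
  intro i hi
  obtain ⟨n, rfl⟩ : ∃ n, i = n + 1 := ⟨i - 1, by omega⟩
  have hk := key n
  have h1 : (0:ℝ) < ((n : ℝ) + 1) * p (n + 1) := by
    have := hppos (n + 1); positivity
  have h2 : (0:ℝ) < W (n + 1 - 1) := hWpos _
  have hn1 : n + 1 - 1 = n := rfl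
  rw [hn1] at h2 ⊢
  push_cast
  rw [div_le_div_iff₀ h1 h2, show n + 1 + 1 = n + 2 from rfl]
  nlinarith [hk]
end

section
/- With p_j defined as in the Robbins–Pitman recursion (p_0 > 0, p_j = j^{-1}Σ_{i=0}^{j-1}M_{j-i}p_i where M_j = (1/2)Σ_{i=2}^s c_i^j, 0 ≤ c_i < 1, at least one c_i > 0), the sequence of partial sums W_i = Σ_{j=0}^i p_j is log-concave: W_i² ≥ W_{i-1}W_{i+1} for all i ≥ 1. -/
/-- Partial sums of a sequence. -/
def Vv (p : ℕ → ℝ) (j : ℕ) : ℝ := ∑ i ∈ Finset.range j, p i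

lemma Vv_succ (p : ℕ → ℝ) (j : ℕ) : Vv p (j + 1) = Vv p j + p j :=
  Finset.sum_range_succ p j

/-- Core lemma: for the Robbins–Pitman recursion with nonnegative, nonincreasing
canonical sequence `M`, the partial sums `V` satisfy `V m * p (m+1) ≤ V (m+1) * p m`. -/
lemma aux_RP (M p : ℕ → ℝ)
    (hMnn : ∀ k : ℕ, 1 ≤ k → 0 ≤ M k)
    (hMdec : ∀ k : ℕ, 1 ≤ k → M (k + 1) ≤ M k)
    (hp0 : 0 < p 0) (hpnn : ∀ j, 0 ≤ p j)
    (hprec : ∀ m : ℕ, 1 ≤ m → (m : ℝ) * p m = ∑ i ∈ Finset.range m, M (m - i) * p i) :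
    ∀ m : ℕ, Vv p m * p (m + 1) ≤ Vv p (m + 1) * p m := by
  have hVnn : ∀ j, 0 ≤ Vv p j := fun j => Finset.sum_nonneg fun i _ => hpnn i
  have hVstep : ∀ j, Vv p (j + 1) = Vv p j + p j := Vv_succ p
  have hV0 : Vv p 0 = 0 := by simp [Vv]
  have hV1 : Vv p 1 = p 0 := by simp [Vv]
  have hVpos : ∀ j, 0 < Vv p (j + 1) := by
    intro j
    induction j with
    | zero => rw [hVstep, hV0]; simpa using hp0
    | succ k ihk => rw [hVstep]; have := hpnn (k + 1); linarith
  intro m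
  induction m using Nat.strong_induction_on with
  | _ m ih =>
    by_cases hm0 : m = 0
    · subst hm0
      rw [hV0, zero_mul]
      exact mul_nonneg (hVnn 1) (hpnn 0)
    · have hm : 1 ≤ m := by omega
      have hm1 : (0 : ℝ) < (m : ℝ) + 1 := by positivity
      -- log-concavity of V at smaller indices
      have main : ∀ j, j < m → Vv p j * Vv p (j + 2) ≤ Vv p (j + 1) ^ 2 := by
        intro j hj
        have g := ih j hj
        have key : Vv p (j + 1) ^ 2 = Vv p (j + 1) * Vv p j + Vv p (j + 1) * p j := by
          linear_combination Vv p (j + 1) * hVstep j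
        have key2 : Vv p j * Vv p (j + 2) = Vv p j * Vv p (j + 1) + Vv p j * p (j + 1) := by
          linear_combination Vv p j * hVstep (j + 1)
        nlinarith [g]
      -- S_K ≥ 0
      have hS : ∀ d, d ≤ m → Vv p (m + 1) * Vv p (m - d) ≤ Vv p m * Vv p (m - d + 1) := by
        intro d
        induction d with
        | zero =>
          intro _
          rw [Nat.sub_zero]
          exact le_of_eq (mul_comm _ _)
        | succ e ihe =>
          intro h
          have ihe' := ihe (by omega)
          have e1 : m - e = m - (e + 1) + 1 := by omega
          rw [e1] at ihe'
          set j := m - (e + 1) with hjdef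
          have hjm : j < m := by omega
          have hmain := main j hjm
          have hp2 : 0 < Vv p (j + 2) := hVpos (j + 1)
          nlinarith [mul_nonneg (hVnn (j + 1)) (sub_nonneg.mpr ihe'),
            mul_nonneg (hVnn (m + 1)) (sub_nonneg.mpr hmain), hp2]
      -- partial sums of q
      have hSsum : ∀ K, K ≤ m →
          ∑ k ∈ Finset.range K,
              (Vv p (m + 1) * p (m - (k + 1)) - Vv p m * p (m - (k + 1) + 1)) =
            Vv p m * Vv p (m - K + 1) - Vv p (m + 1) * Vv p (m - K) := by
        intro K
        induction K with
        | zero =>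
          intro _
          rw [Nat.sub_zero, Finset.sum_range_zero]
          ring
        | succ K ihK =>
          intro hK1
          have ihK' := ihK (by omega)
          rw [Finset.sum_range_succ, ihK']
          have e1 : m - K = m - (K + 1) + 1 := by omega
          rw [e1]
          set j := m - (K + 1) with hjdef
          linear_combination Vv p m * hVstep (j + 1) - Vv p (m + 1) * hVstep j
      -- Abel-type bound
      have hT : ∀ K, 1 ≤ K → K ≤ m →
          M K * (Vv p m * Vv p (m - K + 1) - Vv p (m + 1) * Vv p (m - K)) ≤
            ∑ k ∈ Finset.range K,
              M (k + 1) * (Vv p (m + 1) * p (m - (k + 1)) - Vv p m * p (m - (k + 1) + 1)) := by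
        intro K hK
        induction K, hK using Nat.le_induction with
        | base =>
          intro h1m
          rw [← hSsum 1 h1m]
          simp [Finset.sum_range_one]
        | succ K hK ihK =>
          intro hK1m
          have hKm : K ≤ m := by omega
          have ih' := ihK hKm
          have hSK : 0 ≤ Vv p m * Vv p (m - K + 1) - Vv p (m + 1) * Vv p (m - K) :=
            sub_nonneg.mpr (hS K hKm)
          have hsum1 := hSsum K hKm
          have hsum2 := hSsum (K + 1) hK1m
          rw [Finset.sum_range_succ] at hsum2
          rw [Finset.sum_range_succ]
          have hMd : 0 ≤ (M K - M (K + 1)) *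
              (Vv p m * Vv p (m - K + 1) - Vv p (m + 1) * Vv p (m - K)) :=
            mul_nonneg (sub_nonneg.mpr (hMdec K hK)) hSK
          have h2 : M (K + 1) *
              (Vv p m * Vv p (m - (K + 1) + 1) - Vv p (m + 1) * Vv p (m - (K + 1))) =
              M (K + 1) * (Vv p m * Vv p (m - K + 1) - Vv p (m + 1) * Vv p (m - K)) +
              M (K + 1) *
                (Vv p (m + 1) * p (m - (K + 1)) - Vv p m * p (m - (K + 1) + 1)) := by
            rw [← hsum2, ← hsum1]
            ring
          linarith [ih', hMd, h2]
      -- reflect the q-sum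
      have A1 : ∑ k ∈ Finset.range m,
            M (k + 1) * (Vv p (m + 1) * p (m - (k + 1)) - Vv p m * p (m - (k + 1) + 1)) =
          ∑ i ∈ Finset.range m, M (m - i) * (Vv p (m + 1) * p i - Vv p m * p (i + 1)) := by
        rw [← Finset.sum_range_reflect
          (fun i => M (m - i) * (Vv p (m + 1) * p i - Vv p m * p (i + 1))) m]
        apply Finset.sum_congr rfl
        intro k hk
        have hk' : k < m := Finset.mem_range.mp hk
        have e2 : m - 1 - k = m - (k + 1) := by omega
        rw [e2, show m - (m - (k + 1)) = k + 1 by omega]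
      have hsplit : ∑ i ∈ Finset.range m, M (m - i) * (Vv p (m + 1) * p i - Vv p m * p (i + 1)) =
          Vv p (m + 1) * (∑ i ∈ Finset.range m, M (m - i) * p i) -
            Vv p m * (∑ i ∈ Finset.range m, M (m - i) * p (i + 1)) := by
        rw [Finset.mul_sum, Finset.mul_sum, ← Finset.sum_sub_distrib]
        exact Finset.sum_congr rfl fun i _ => by ring
      have A2 : ∑ i ∈ Finset.range (m + 1), M (m + 1 - i) * p i =
          (∑ i ∈ Finset.range m, M (m - i) * p (i + 1)) + M (m + 1) * p 0 := by
        rw [Finset.sum_range_succ' (fun i => M (m + 1 - i) * p i) m]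
        simp only [Nat.add_sub_add_right, Nat.sub_zero]
      have R1 : (m : ℝ) * p m = ∑ i ∈ Finset.range m, M (m - i) * p i := hprec m hm
      have R2 : ((m : ℝ) + 1) * p (m + 1) = ∑ i ∈ Finset.range (m + 1), M (m + 1 - i) * p i := by
        have h := hprec (m + 1) (by omega)
        push_cast at h
        exact h
      have hqsum : ∑ k ∈ Finset.range m,
            M (k + 1) * (Vv p (m + 1) * p (m - (k + 1)) - Vv p m * p (m - (k + 1) + 1)) =
          Vv p (m + 1) * ((m : ℝ) * p m) - Vv p m * (((m : ℝ) + 1) * p (m + 1)) +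
            Vv p m * (M (m + 1) * p 0) := by
        rw [A1, hsplit, ← R1]
        have e3 : ∑ i ∈ Finset.range m, M (m - i) * p (i + 1) =
            ((m : ℝ) + 1) * p (m + 1) - M (m + 1) * p 0 := by
          rw [R2, A2]; ring
        rw [e3]; ring
      have hTm := hT m hm le_rfl
      rw [Nat.sub_self] at hTm
      rw [hqsum] at hTm
      rw [hV0, hV1] at hTm
      -- hTm : M m * (Vv p m * p 0 - Vv p (m+1) * 0) ≤ ...
      have hMd2 : 0 ≤ (M m - M (m + 1)) * (Vv p m * p 0) :=
        mul_nonneg (sub_nonneg.mpr (hMdec m hm)) (mul_nonneg (hVnn m) (hpnn 0))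
      have hfin : 0 ≤ Vv p (m + 1) * p m := mul_nonneg (hVnn (m + 1)) (hpnn m)
      nlinarith [hTm, hMd2, hfin, hm1]

/-- Log-concavity of the partial sums of the Robbins–Pitman weights:
W_i² ≥ W_{i-1} W_{i+1} for i ≥ 1. -/
theorem stmt8 (s : ℕ) (hs : 2 ≤ s) (c : ℕ → ℝ)
    (hc : ∀ i ∈ Finset.Icc 2 s, 0 ≤ c i ∧ c i < 1)
    (hcpos : ∃ i ∈ Finset.Icc 2 s, 0 < c i)
    (M : ℕ → ℝ) (hM : ∀ j : ℕ, 1 ≤ j → M j = (1 / 2) * ∑ i ∈ Finset.Icc 2 s, c i ^ j)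
    (p : ℕ → ℝ) (hp0 : 0 < p 0)
    (hrec : ∀ j : ℕ, 1 ≤ j → p j = (j : ℝ)⁻¹ * ∑ i ∈ Finset.range j, M (j - i) * p i)
    (W : ℕ → ℝ) (hW : ∀ i, W i = ∑ j ∈ Finset.range (i + 1), p j) :
    ∀ i : ℕ, 1 ≤ i → W (i - 1) * W (i + 1) ≤ W i ^ 2 := by
  have hMnn : ∀ k : ℕ, 1 ≤ k → 0 ≤ M k := by
    intro k hk
    rw [hM k hk]
    have h : 0 ≤ ∑ i ∈ Finset.Icc 2 s, c i ^ k :=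
      Finset.sum_nonneg fun i hi => pow_nonneg (hc i hi).1 k
    linarith
  have hMdec : ∀ k : ℕ, 1 ≤ k → M (k + 1) ≤ M k := by
    intro k hk
    rw [hM k hk, hM (k + 1) (by omega)]
    have h : ∀ i ∈ Finset.Icc 2 s, c i ^ (k + 1) ≤ c i ^ k := fun i hi =>
      pow_le_pow_of_le_one (hc i hi).1 (hc i hi).2.le (by omega)
    have := Finset.sum_le_sum h
    linarith
  have hpnn : ∀ j, 0 ≤ p j := by
    intro j
    induction j using Nat.strong_induction_on with
    | _ j ihj =>
      rcases j with _ | n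
      · exact hp0.le
      · rw [hrec (n + 1) (by omega)]
        apply mul_nonneg (by positivity)
        apply Finset.sum_nonneg
        intro i hi
        have hi' : i < n + 1 := Finset.mem_range.mp hi
        exact mul_nonneg (hMnn _ (by omega)) (ihj i hi')
  have hprec : ∀ m : ℕ, 1 ≤ m → (m : ℝ) * p m = ∑ i ∈ Finset.range m, M (m - i) * p i := by
    intro m hm
    have hm0 : ((m : ℕ) : ℝ) ≠ 0 := Nat.cast_ne_zero.mpr (by omega)
    rw [hrec m hm, ← mul_assoc, mul_inv_cancel₀ hm0, one_mul]
  have G := aux_RP M p hMnn hMdec hp0 hpnn hprec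
  have hWV : ∀ j, W j = Vv p (j + 1) := fun j => by rw [hW j]; rfl
  intro i hi
  have e1 : W (i - 1) = Vv p i := by
    rw [hWV (i - 1), show i - 1 + 1 = i from by omega]
  rw [e1, hWV i, hWV (i + 1)]
  have g := G i
  have s1 := Vv_succ p i
  rw [Vv_succ p (i + 1)]
  have key : Vv p (i + 1) ^ 2 = Vv p (i + 1) * Vv p i + Vv p (i + 1) * p i := by
    linear_combination Vv p (i + 1) * s1
  nlinarith [g, key]
end
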